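/- Let S be a finite set, Y a finite nonempty set, and ρ, φ : S → Sym(Y) two maps, extended to homomorphisms F(S) → Sym(Y). Let w ∈ F(S) be given by a reduced word w = s_1^{ε_1} ··· s_ℓ^{ε_ℓ} with s_j ∈ S and ε_j ∈ {±1}. Then the proportion of y ∈ Y for which exactly one of 'w ∈ Stab(ρ,y)' and 'w ∈ Stab(φ,y)' holds is at most Σ_{j=1}^{ℓ} d_H(ρ(s_j), φ(s_j)) = Σ_{s∈S} v_s(w) · d_H(ρ(s), φ(s)). -/

import Mathlib

open Finset

private def mismatch {Y : Type*} [Fintype Y] [DecidableEq Y] (σ τ : Equiv.Perm Y) : Finset Y :=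
  Finset.univ.filter fun y => σ y ≠ τ y

private lemma mismatch_mul {Y : Type*} [Fintype Y] [DecidableEq Y]
    (σ σ' P P' : Equiv.Perm Y) :
    (mismatch (σ * P) (σ' * P')).card ≤ (mismatch σ σ').card + (mismatch P P').card := by
  have hsub : mismatch (σ * P) (σ' * P') ⊆
      (Finset.univ.filter fun y => σ (P y) ≠ σ' (P y)) ∪ mismatch P P' := by
    intro y hy
    simp only [mismatch, Finset.mem_filter, Finset.mem_union, Finset.mem_univ, true_and] at hy ⊢
    simp only [Equiv.Perm.mul_apply] at hy ⊢
    by_cases h : P y = P' y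
    · left; rw [h] at hy ⊢; exact hy
    · right; exact h
  have hcard : (Finset.univ.filter fun y => σ (P y) ≠ σ' (P y)).card
      = (mismatch σ σ').card := by
    apply Finset.card_bij (fun y _ => P y)
    · intro y hy
      simp only [mismatch, Finset.mem_filter, Finset.mem_univ, true_and] at hy ⊢
      exact hy
    · intro a ha b hb h; exact P.injective h
    · intro z hz
      refine ⟨P⁻¹ z, ?_, by simp⟩
      simp only [mismatch, Finset.mem_filter, Finset.mem_univ, true_and] at hz ⊢
      simpa using hz
  calc (mismatch (σ * P) (σ' * P')).card
      ≤ ((Finset.univ.filter fun y => σ (P y) ≠ σ' (P y)) ∪ mismatch P P').card :=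
        Finset.card_le_card hsub
    _ ≤ (Finset.univ.filter fun y => σ (P y) ≠ σ' (P y)).card + (mismatch P P').card :=
        Finset.card_union_le _ _
    _ = (mismatch σ σ').card + (mismatch P P').card := by rw [hcard]

private lemma mismatch_inv {Y : Type*} [Fintype Y] [DecidableEq Y]
    (σ τ : Equiv.Perm Y) :
    (mismatch σ⁻¹ τ⁻¹).card = (mismatch σ τ).card := by
  apply Finset.card_bij (fun y _ => τ⁻¹ y)
  · intro y hy
    simp only [mismatch, Finset.mem_filter, Finset.mem_univ, true_and] at hy ⊢
    intro hc
    apply hy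
    have h1 : σ (τ⁻¹ y) = y := by rw [hc]; simp
    conv_lhs => rw [← h1]
    simp
  · intro a ha b hb h; exact τ⁻¹.injective h
  · intro z hz
    refine ⟨τ z, ?_, by simp⟩
    simp only [mismatch, Finset.mem_filter, Finset.mem_univ, true_and] at hz ⊢
    simp only [Equiv.Perm.inv_def, Equiv.symm_apply_apply]
    intro hc
    have h3 := congrArg σ hc
    simp at h3
    exact hz h3.symm

private lemma mismatch_prod {S : Type*} {Y : Type*} [Fintype Y] [DecidableEq Y]
    (ρ φ : S → Equiv.Perm Y) (L : List (S × Bool)) :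
    (mismatch ((L.map fun x => cond x.2 (ρ x.1) (ρ x.1)⁻¹).prod)
      ((L.map fun x => cond x.2 (φ x.1) (φ x.1)⁻¹).prod)).card
    ≤ (L.map fun x => (mismatch (ρ x.1) (φ x.1)).card).sum := by
  induction L with
  | nil => simp [mismatch]
  | cons a t ih =>
    simp only [List.map_cons, List.prod_cons, List.sum_cons]
    refine le_trans (mismatch_mul _ _ _ _) ?_
    have hhead : (mismatch (cond a.2 (ρ a.1) (ρ a.1)⁻¹) (cond a.2 (φ a.1) (φ a.1)⁻¹)).card
        = (mismatch (ρ a.1) (φ a.1)).card := by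
      cases a.2 <;> simp [mismatch_inv]
    rw [hhead]
    exact Nat.add_le_add_left ih _

private lemma count_mul_sum {S : Type*} [Fintype S] [DecidableEq S]
    (c : S → ℕ) (l : List S) :
    ∑ s : S, l.count s * c s = (l.map c).sum := by
  induction l with
  | nil => simp
  | cons a t ih =>
    simp only [List.map_cons, List.sum_cons, List.count_cons]
    have h2 : ∑ x : S, (if (a == x) = true then 1 else 0) * c x = c a := by
      simp [beq_iff_eq]
    simp only [add_mul]
    rw [Finset.sum_add_distrib, h2, add_comm, ih]

theorem stab_symmDiff_le_weighted_hamming (S : Type*) [Fintype S] [DecidableEq S]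
    (Y : Type*) [Fintype Y] [Nonempty Y]
    (ρ φ : S → Equiv.Perm Y) (w : FreeGroup S) :
    (Nat.card {y : Y //
        Xor' (FreeGroup.lift ρ w y = y) (FreeGroup.lift φ w y = y)} : ℝ)
        / Fintype.card Y
      ≤ ∑ s : S, ((w.toWord.map Prod.fst).count s : ℝ) *
          ((Nat.card {y : Y // ρ s y ≠ φ s y} : ℝ) / Fintype.card Y) := by
  classical
  set L := w.toWord with hL
  set Pρ := FreeGroup.lift ρ w with hPρ
  set Pφ := FreeGroup.lift φ w with hPφ
  have hρ : Pρ = (L.map fun x => cond x.2 (ρ x.1) (ρ x.1)⁻¹).prod := by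
    rw [hPρ, hL]
    conv_lhs => rw [← FreeGroup.mk_toWord (x := w)]
    rw [FreeGroup.lift_mk]
  have hφ : Pφ = (L.map fun x => cond x.2 (φ x.1) (φ x.1)⁻¹).prod := by
    rw [hPφ, hL]
    conv_lhs => rw [← FreeGroup.mk_toWord (x := w)]
    rw [FreeGroup.lift_mk]
  have hm : ∀ s : S, Nat.card {y : Y // ρ s y ≠ φ s y} = (mismatch (ρ s) (φ s)).card := by
    intro s
    rw [Nat.card_eq_fintype_card, Fintype.card_subtype]
    rfl
  have hA : Nat.card {y : Y // Xor' (Pρ y = y) (Pφ y = y)} ≤ (mismatch Pρ Pφ).card := by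
    rw [Nat.card_eq_fintype_card, Fintype.card_subtype]
    apply Finset.card_le_card
    intro y hy
    simp only [Finset.mem_filter, Finset.mem_univ, true_and, mismatch] at hy ⊢
    rcases hy with ⟨h1, h2⟩ | ⟨h1, h2⟩
    · rw [h1]; exact fun hc => h2 hc.symm
    · rw [h1]; exact fun hc => h2 hc
  have hnat : Nat.card {y : Y // Xor' (Pρ y = y) (Pφ y = y)}
      ≤ ∑ s : S, (L.map Prod.fst).count s * (mismatch (ρ s) (φ s)).card := by
    rw [count_mul_sum (fun s => (mismatch (ρ s) (φ s)).card) (L.map Prod.fst), List.map_map]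
    refine hA.trans ?_
    rw [hρ, hφ]
    exact mismatch_prod ρ φ L
  calc (Nat.card {y : Y // Xor' (Pρ y = y) (Pφ y = y)} : ℝ) / Fintype.card Y
      ≤ ((∑ s : S, (L.map Prod.fst).count s * (mismatch (ρ s) (φ s)).card : ℕ) : ℝ)
          / Fintype.card Y := by
        gcongr
    _ = ∑ s : S, ((L.map Prod.fst).count s : ℝ) *
          ((Nat.card {y : Y // ρ s y ≠ φ s y} : ℝ) / Fintype.card Y) := by
        push_cast
        rw [Finset.sum_div]
        refine Finset.sum_congr rfl fun s _ => ?_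
        rw [hm s, mul_div_assoc]
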